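/- For every nonzero rational number w such that the denominators do not vanish and the three elements are pairwise distinct, the set {1, b, c} is a strong rational D(-1)-triple, where b = (w⁸+56w⁶+1240w⁴+10976w²+38416)/(16w²(14+w²)²) and c = (w⁸+40w⁶+4888w⁴+7840w²+38416)(w⁸-4w⁷+24w⁶-40w⁵+152w⁴+16w³+608w²+672w+784)(w⁸+4w⁷+24w⁶+40w⁵+152w⁴-16w³+608w²-672w+784)/(16w²(w⁶+18w⁴-100w²-392)²(3w⁴+28w²+140)²). -/

import Mathlib

/-- `a`, `b`, `c` form a strong rational `D(-1)`-triple: three distinct nonzero rationals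
such that `a² - 1`, `b² - 1`, `c² - 1`, `ab - 1`, `ac - 1`, `bc - 1` are rational squares. -/
def IsStrongDminus1Triple (a b c : ℚ) : Prop :=
  a ≠ b ∧ a ≠ c ∧ b ≠ c ∧ a ≠ 0 ∧ b ≠ 0 ∧ c ≠ 0 ∧
    IsSquare (a ^ 2 - 1) ∧ IsSquare (b ^ 2 - 1) ∧ IsSquare (c ^ 2 - 1) ∧
    IsSquare (a * b - 1) ∧ IsSquare (a * c - 1) ∧ IsSquare (b * c - 1)

/-- The family of strong rational `D(-1)`-triples obtained by the substitution
`u = (14 + w²)/(4w)` in the parametrization `b = (4u⁴ + 1)/(4u²)`. -/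
theorem strong_triple_rank_two_family (w : ℚ) (hw : w ≠ 0)
    (hd0 : 14 + w ^ 2 ≠ 0)
    (hd1 : w ^ 6 + 18 * w ^ 4 - 100 * w ^ 2 - 392 ≠ 0)
    (hd2 : 3 * w ^ 4 + 28 * w ^ 2 + 140 ≠ 0)
    (b c : ℚ)
    (hb : b = (w ^ 8 + 56 * w ^ 6 + 1240 * w ^ 4 + 10976 * w ^ 2 + 38416) /
      (16 * w ^ 2 * (14 + w ^ 2) ^ 2))
    (hc : c = (w ^ 8 + 40 * w ^ 6 + 4888 * w ^ 4 + 7840 * w ^ 2 + 38416) *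
      (w ^ 8 - 4 * w ^ 7 + 24 * w ^ 6 - 40 * w ^ 5 + 152 * w ^ 4 + 16 * w ^ 3 +
        608 * w ^ 2 + 672 * w + 784) *
      (w ^ 8 + 4 * w ^ 7 + 24 * w ^ 6 + 40 * w ^ 5 + 152 * w ^ 4 - 16 * w ^ 3 +
        608 * w ^ 2 - 672 * w + 784) /
      (16 * w ^ 2 * (w ^ 6 + 18 * w ^ 4 - 100 * w ^ 2 - 392) ^ 2 *
        (3 * w ^ 4 + 28 * w ^ 2 + 140) ^ 2))
    (hne1 : (1 : ℚ) ≠ b) (hne2 : (1 : ℚ) ≠ c) (hne3 : b ≠ c) :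
    IsStrongDminus1Triple 1 b c := by
  have e1 : b - 1 = ((w ^ 4 + 20 * w ^ 2 + 196) / (4 * w * (14 + w ^ 2))) ^ 2 := by
    rw [hb]; field_simp; ring
  have e2 : b ^ 2 - 1 = ((w ^ 8 + 56 * w ^ 6 + 1112 * w ^ 4 + 10976 * w ^ 2 + 38416) /
      (16 * w ^ 2 * (14 + w ^ 2) ^ 2)) ^ 2 := by
    rw [hb]; field_simp; ring
  have e3 : c - 1 = ((w ^ 12 - 36 * w ^ 10 - 1220 * w ^ 8 - 17376 * w ^ 6 - 66832 * w ^ 4 -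
      78400 * w ^ 2 + 153664) /
      (4 * w * (w ^ 6 + 18 * w ^ 4 - 100 * w ^ 2 - 392) * (3 * w ^ 4 + 28 * w ^ 2 + 140))) ^ 2 := by
    rw [hc, div_pow, div_sub_one (by simp [hw, hd0, hd1, hd2]), div_eq_div_iff (by simp [hw, hd0, hd1, hd2]) (by simp [hw, hd0, hd1, hd2])]; ring
  have e4 : c ^ 2 - 1 = ((w ^ 24 + 72 * w ^ 22 - 3640 * w ^ 20 - 193376 * w ^ 18 -
      3985680 * w ^ 16 - 45180672 * w ^ 14 - 335810816 * w ^ 12 - 1984633856 * w ^ 10 -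
      8640483584 * w ^ 8 - 21661079552 * w ^ 6 - 19703412736 * w ^ 4 + 24094515200 * w ^ 2 +
      23612624896) /
      (16 * w ^ 2 * (w ^ 6 + 18 * w ^ 4 - 100 * w ^ 2 - 392) ^ 2 *
        (3 * w ^ 4 + 28 * w ^ 2 + 140) ^ 2)) ^ 2 := by
    rw [hc, div_pow, div_pow, div_sub_one (by simp [hw, hd0, hd1, hd2]), div_eq_div_iff (by simp [hw, hd0, hd1, hd2]) (by simp [hw, hd0, hd1, hd2])]; ring
  have e5 : b * c - 1 = ((w ^ 16 + 64 * w ^ 14 + 2800 * w ^ 12 + 60928 * w ^ 10 +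
      760160 * w ^ 8 + 4893696 * w ^ 6 + 14739200 * w ^ 4 + 19668992 * w ^ 2 + 30118144) /
      (16 * w ^ 2 * (14 + w ^ 2) * (w ^ 6 + 18 * w ^ 4 - 100 * w ^ 2 - 392) *
        (3 * w ^ 4 + 28 * w ^ 2 + 140))) ^ 2 := by
    rw [hb, hc, div_mul_div_comm, div_sub_one (by simp [hw, hd0, hd1, hd2]), div_pow, div_eq_div_iff (by simp [hw, hd0, hd1, hd2]) (by simp [hw, hd0, hd1, hd2])]; ring
  refine ⟨hne1, hne2, hne3, one_ne_zero, ?_, ?_, ⟨0, by ring⟩,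
    ⟨_, by rw [← sq, ← e2]⟩, ⟨_, by rw [← sq, ← e4]⟩,
    ⟨_, by rw [← sq, one_mul, ← e1]⟩, ⟨_, by rw [← sq, one_mul, ← e3]⟩,
    ⟨_, by rw [← sq, ← e5]⟩⟩
  · intro h
    rw [h] at e1
    nlinarith [sq_nonneg ((w ^ 4 + 20 * w ^ 2 + 196) / (4 * w * (14 + w ^ 2)))]
  · intro h
    rw [h] at e3
    nlinarith [sq_nonneg ((w ^ 12 - 36 * w ^ 10 - 1220 * w ^ 8 - 17376 * w ^ 6 - 66832 * w ^ 4 -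
      78400 * w ^ 2 + 153664) /
      (4 * w * (w ^ 6 + 18 * w ^ 4 - 100 * w ^ 2 - 392) * (3 * w ^ 4 + 28 * w ^ 2 + 140)))]
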